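/- For 𝔤 = 𝔰𝔩₂ with affine Cartan matrix A = [[2,−2],[−2,2]], the (non-reduced) Tits extension W̃_a of the affine Weyl group admits no W̃-equivariant section of the coroot lattice Q^∨ ≅ ℤ: any lift τ = z·s̃₀s̃₁ (z ∈ Z) of the generator of Q^∨ satisfies s̃₁τs̃₁⁻¹ = τ⁻¹ if and only if s̃₁²s̃₀² = 1, which fails in W̃_a. -/

import Mathlib

/-- Relators of the Tits extension `W̃_a` of the affine Weyl group of `𝔰𝔩₂`
(affine Cartan matrix `[[2,−2],[−2,2]]`, so `m₀₁ = ∞` and there is no braid relation):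
`s̃_i⁴ = 1`, `s̃₀ s̃₁² s̃₀⁻¹ = s̃₁²` and `s̃₁ s̃₀² s̃₁⁻¹ = s̃₀²`
(the exponents `(s̃_i²)^{−a_{ji}} = (s̃_i²)²` being trivial since `s̃_i⁴ = 1`). -/
def sl2AffineTitsRels : Set (FreeGroup (Fin 2)) :=
  { (FreeGroup.of 0) ^ 4, (FreeGroup.of 1) ^ 4,
    FreeGroup.of 0 * (FreeGroup.of 1) ^ 2 * (FreeGroup.of 0)⁻¹ *
      (((FreeGroup.of 1) ^ 2) * ((FreeGroup.of 0) ^ 2) ^ 2)⁻¹,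
    FreeGroup.of 1 * (FreeGroup.of 0) ^ 2 * (FreeGroup.of 1)⁻¹ *
      (((FreeGroup.of 0) ^ 2) * ((FreeGroup.of 1) ^ 2) ^ 2)⁻¹ }

namespace Stmt14Aux

abbrev G := PresentedGroup sl2AffineTitsRels

def s0 : G := PresentedGroup.of 0
def s1 : G := PresentedGroup.of 1

lemma hrel : ∀ r ∈ sl2AffineTitsRels, (PresentedGroup.mk sl2AffineTitsRels r : G) = 1 := by
  intro r hr
  exact (QuotientGroup.eq_one_iff _).mpr (Subgroup.subset_normalClosure hr)

lemma h04 : s0 ^ 4 = 1 := by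
  have := hrel _ (show (FreeGroup.of 0)^4 ∈ sl2AffineTitsRels by simp [sl2AffineTitsRels])
  simpa [map_pow, s0, s1, PresentedGroup.of] using this

lemma h14 : s1 ^ 4 = 1 := by
  have := hrel _ (show (FreeGroup.of 1)^4 ∈ sl2AffineTitsRels by simp [sl2AffineTitsRels])
  simpa [map_pow, s0, s1, PresentedGroup.of] using this

lemma hr3 : s0 * s1 ^ 2 * s0⁻¹ * ((s1 ^ 2) * (s0 ^ 2) ^ 2)⁻¹ = 1 := by
  have := hrel _ (show FreeGroup.of 0 * (FreeGroup.of 1) ^ 2 * (FreeGroup.of 0)⁻¹ *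
      (((FreeGroup.of 1) ^ 2) * ((FreeGroup.of 0) ^ 2) ^ 2)⁻¹ ∈ sl2AffineTitsRels by
    simp [sl2AffineTitsRels])
  simpa [map_pow, map_mul, map_inv, s0, s1, PresentedGroup.of] using this

lemma hr4 : s1 * s0 ^ 2 * s1⁻¹ * ((s0 ^ 2) * (s1 ^ 2) ^ 2)⁻¹ = 1 := by
  have := hrel _ (show FreeGroup.of 1 * (FreeGroup.of 0) ^ 2 * (FreeGroup.of 1)⁻¹ *
      (((FreeGroup.of 0) ^ 2) * ((FreeGroup.of 1) ^ 2) ^ 2)⁻¹ ∈ sl2AffineTitsRels by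
    simp [sl2AffineTitsRels])
  simpa [map_pow, map_mul, map_inv, s0, s1, PresentedGroup.of] using this

lemma c01 : Commute s0 (s1 ^ 2) := by
  have h := hr3
  have h4 : (s0 ^ 2) ^ 2 = 1 := by rw [← pow_mul]; exact h04
  rw [h4, mul_one] at h
  have h' : s0 * s1 ^ 2 * s0⁻¹ = s1 ^ 2 := by
    have := mul_eq_one_iff_eq_inv.mp h
    simpa using this
  show s0 * s1 ^ 2 = s1 ^ 2 * s0
  calc s0 * s1 ^ 2 = (s0 * s1 ^ 2 * s0⁻¹) * s0 := by group
    _ = s1 ^ 2 * s0 := by rw [h']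

lemma c10 : Commute s1 (s0 ^ 2) := by
  have h := hr4
  have h4 : (s1 ^ 2) ^ 2 = 1 := by rw [← pow_mul]; exact h14
  rw [h4, mul_one] at h
  have h' : s1 * s0 ^ 2 * s1⁻¹ = s0 ^ 2 := by
    have := mul_eq_one_iff_eq_inv.mp h
    simpa using this
  show s1 * s0 ^ 2 = s0 ^ 2 * s1
  calc s1 * s0 ^ 2 = (s1 * s0 ^ 2 * s1⁻¹) * s1 := by group
    _ = s0 ^ 2 * s1 := by rw [h']

lemma comm01 : ∀ z ∈ Subgroup.closure ({s0 ^ 2, s1 ^ 2} : Set G),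
    Commute z s0 ∧ Commute z s1 := by
  intro z hz
  induction hz using Subgroup.closure_induction with
  | mem x hx =>
      rcases hx with h | h <;> subst h
      · exact ⟨((Commute.refl s0).pow_left 2), c10.symm⟩
      · exact ⟨c01.symm, ((Commute.refl s1).pow_left 2)⟩
  | one => exact ⟨Commute.one_left _, Commute.one_left _⟩
  | mul x y hx hy ihx ihy => exact ⟨ihx.1.mul_left ihy.1, ihx.2.mul_left ihy.2⟩
  | inv x hx ih => exact ⟨ih.1.inv_left, ih.2.inv_left⟩

lemma comm_closure (z : G) (h0 : Commute z s0) (h1 : Commute z s1) :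
    ∀ y ∈ Subgroup.closure ({s0 ^ 2, s1 ^ 2} : Set G), Commute z y := by
  intro y hy
  induction hy using Subgroup.closure_induction with
  | mem x hx =>
      rcases hx with h | h <;> subst h
      · exact h0.pow_right 2
      · exact h1.pow_right 2
  | one => exact Commute.one_right _
  | mul x y hx hy ihx ihy => exact ihx.mul_right ihy
  | inv x hx ih => exact ih.inv_right

lemma sq_one : ∀ z ∈ Subgroup.closure ({s0 ^ 2, s1 ^ 2} : Set G), z * z = 1 := by
  intro z hz
  induction hz using Subgroup.closure_induction with
  | mem x hx =>
      rcases hx with h | h <;> subst h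
      · rw [← pow_add]; exact h04
      · rw [← pow_add]; exact h14
  | one => simp
  | mul x y hx hy ihx ihy =>
      obtain ⟨ha, hb⟩ := comm01 x hx
      have hxy : y * x = x * y := (comm_closure x ha hb y hy).symm
      calc x * y * (x * y) = x * (y * x) * y := by group
        _ = x * (x * y) * y := by rw [hxy]
        _ = (x * x) * (y * y) := by group
        _ = 1 := by rw [ihx, ihy, one_mul]
  | inv x hx ih =>
      rw [← mul_inv_rev, inv_eq_one]
      exact ih

-- nontriviality via ZMod 4 × ZMod 4
abbrev T := Multiplicative (ZMod 4 × ZMod 4)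

def f : Fin 2 → T := fun i => Multiplicative.ofAdd (if i = 0 then (1, 0) else (0, 1))

lemma lift_rels : ∀ r ∈ sl2AffineTitsRels, FreeGroup.lift f r = 1 := by
  intro r hr
  rcases hr with h | h | h | h <;> subst h <;>
    · simp only [map_mul, map_pow, map_inv, FreeGroup.lift_apply_of]
      decide

def φ : G →* T := PresentedGroup.toGroup lift_rels

lemma ne_one : s1 ^ 2 * s0 ^ 2 ≠ 1 := by
  intro h
  have := congrArg φ h
  rw [map_mul, map_pow, map_pow, map_one] at this
  have h0 : φ s0 = f 0 := PresentedGroup.toGroup.of lift_rels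
  have h1 : φ s1 = f 1 := PresentedGroup.toGroup.of lift_rels
  rw [h0, h1] at this
  exact absurd this (by decide)

end Stmt14Aux

open Stmt14Aux

/-- for `𝔤 = 𝔰𝔩₂`, in the (non-reduced) Tits extension `W̃_a` of the
affine Weyl group, any lift `τ = z·s̃₀s̃₁` (with `z ∈ Z`, the subgroup generated by the
squares) of the generator of `Q^∨ ≅ ℤ` satisfies `s̃₁ τ s̃₁⁻¹ = τ⁻¹` if and only if
`s̃₁² s̃₀² = 1`; and `s̃₁² s̃₀² ≠ 1` in `W̃_a`, so there is no `W̃`-equivariant section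
of `Q^∨`. -/


theorem stmt14 :
    letI G := PresentedGroup sl2AffineTitsRels
    letI s0 : G := PresentedGroup.of 0
    letI s1 : G := PresentedGroup.of 1
    (∀ z ∈ Subgroup.closure ({s0 ^ 2, s1 ^ 2} : Set G),
        (s1 * (z * s0 * s1) * s1⁻¹ = (z * s0 * s1)⁻¹ ↔ s1 ^ 2 * s0 ^ 2 = 1)) ∧
      s1 ^ 2 * s0 ^ 2 ≠ 1 := by
  show (∀ z ∈ Subgroup.closure ({Stmt14Aux.s0 ^ 2, Stmt14Aux.s1 ^ 2} : Set Stmt14Aux.G),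
      (Stmt14Aux.s1 * (z * Stmt14Aux.s0 * Stmt14Aux.s1) * Stmt14Aux.s1⁻¹ =
          (z * Stmt14Aux.s0 * Stmt14Aux.s1)⁻¹ ↔ Stmt14Aux.s1 ^ 2 * Stmt14Aux.s0 ^ 2 = 1)) ∧
    Stmt14Aux.s1 ^ 2 * Stmt14Aux.s0 ^ 2 ≠ 1
  constructor
  · intro z hz
    obtain ⟨h0, h1⟩ := comm01 z hz
    have hz2 : z * z = 1 := sq_one z hz
    have hzi : z⁻¹ = z := inv_eq_of_mul_eq_one_right hz2
    -- LHS simplification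
    have lhs : s1 * (z * s0 * s1) * s1⁻¹ = z * (s1 * s0) := by
      calc s1 * (z * s0 * s1) * s1⁻¹ = (s1 * z) * s0 * (s1 * s1⁻¹) := by group
        _ = (z * s1) * s0 * 1 := by rw [← h1, mul_inv_cancel]
        _ = z * (s1 * s0) := by group
    have rhs : (z * s0 * s1)⁻¹ = z * (s1⁻¹ * s0⁻¹) := by
      calc (z * s0 * s1)⁻¹ = s1⁻¹ * s0⁻¹ * z⁻¹ := by group
        _ = s1⁻¹ * s0⁻¹ * z := by rw [hzi]
        _ = s1⁻¹ * (z * s0⁻¹) := by rw [h0.inv_right.eq]; group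
        _ = (z * s1⁻¹) * s0⁻¹ := by rw [h1.inv_right.eq]; group
        _ = z * (s1⁻¹ * s0⁻¹) := by group
    rw [lhs, rhs, mul_right_inj]
    constructor
    · intro h
      have : s1 ^ 2 * s0 ^ 2 = s1 * (s1 * s0) * s0 := by
        rw [pow_two, pow_two]; group
      rw [this, h]
      group
    · intro h
      have h' : s1 * s0 = s1⁻¹ * (s1 ^ 2 * s0 ^ 2) * s0⁻¹ := by
        rw [pow_two, pow_two]; group
      rw [h', h]
      group
  · exact ne_one
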